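/- Let A be a Hermitian n×n complex matrix and let L be a cyclic subspace for A, i.e. a subspace of ℂⁿ with span{ A^k x : k ∈ ℕ, x ∈ L } = ℂⁿ. Let Ω := { g ∈ L : for every eigenvalue λ of A, the orthogonal projection of g onto ker(A − λI) is nonzero } be the set of vectors of maximal type for the resolution of identity of A lying in L. Then Ω is a dense Gδ subset of L (with its subspace topology) and L \ Ω is meagre (of first category) in L. -/

import Mathlib

open MeasureTheory Module

/-- The self-adjoint endomorphism of `ℂⁿ` (with the Euclidean inner product)
associated with a matrix `A`. -/
noncomputable def matEnd (n : ℕ) (A : Matrix (Fin n) (Fin n) ℂ) :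
    Module.End ℂ (EuclideanSpace ℂ (Fin n)) :=
  Matrix.toEuclideanLin A

/-- The complement of a proper submodule of a normed `ℂ`-vector space is dense. -/
lemma aux_dense_compl {V : Type*} [NormedAddCommGroup V] [NormedSpace ℂ V]
    (p : Submodule ℂ V) (hp : p ≠ ⊤) : Dense ((p : Set V)ᶜ) := by
  rw [← interior_eq_empty_iff_dense_compl]
  by_contra h
  exact hp (p.eq_top_of_nonempty_interior' (Set.nonempty_iff_ne_empty.2 h))

set_option maxHeartbeats 1000000 in
theorem stmt_5 (n : ℕ) (A : Matrix (Fin n) (Fin n) ℂ) (hA : A.IsHermitian)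
    (L : Submodule ℂ (EuclideanSpace ℂ (Fin n)))
    (hL : (⨆ k : ℕ, Submodule.map (matEnd n A ^ k) L) = ⊤) :
    IsGδ {g : L | ∀ μ : ℂ, (matEnd n A).HasEigenvalue μ →
        Submodule.orthogonalProjection ((matEnd n A).eigenspace μ) (g : EuclideanSpace ℂ (Fin n)) ≠ 0} ∧
    Dense {g : L | ∀ μ : ℂ, (matEnd n A).HasEigenvalue μ →
        Submodule.orthogonalProjection ((matEnd n A).eigenspace μ) (g : EuclideanSpace ℂ (Fin n)) ≠ 0} ∧
    IsMeagre {g : L | ∀ μ : ℂ, (matEnd n A).HasEigenvalue μ →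
        Submodule.orthogonalProjection ((matEnd n A).eigenspace μ) (g : EuclideanSpace ℂ (Fin n)) ≠ 0}ᶜ := by
  set T := matEnd n A with hTdef
  have hsym : T.IsSymmetric := Matrix.isHermitian_iff_isSymmetric.mp hA
  set U : ℂ → Set L := fun μ =>
    {g : L | Submodule.orthogonalProjection (T.eigenspace μ) (g : EuclideanSpace ℂ (Fin n)) ≠ 0} with hU
  have hSeq : {g : L | ∀ μ : ℂ, T.HasEigenvalue μ →
      Submodule.orthogonalProjection (T.eigenspace μ) (g : EuclideanSpace ℂ (Fin n)) ≠ 0}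
      = ⋂ μ : {μ : ℂ // T.HasEigenvalue μ}, U μ.1 := by
    ext g
    simp [hU, Set.mem_iInter, Subtype.forall]
  have hopenU : ∀ μ : ℂ, IsOpen (U μ) := by
    intro μ
    have hc : Continuous fun g : L =>
        (Submodule.orthogonalProjection (T.eigenspace μ) (g : EuclideanSpace ℂ (Fin n))) :=
      (Submodule.orthogonalProjection (T.eigenspace μ)).continuous.comp continuous_subtype_val
    exact isOpen_compl_singleton.preimage hc
  have hdenseU : ∀ μ : ℂ, T.HasEigenvalue μ → Dense (U μ) := by
    intro μ hμ
    set p : Submodule ℂ L := Submodule.comap L.subtype (T.eigenspace μ)ᗮ with hp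
    have hker : p ≠ ⊤ := by
      intro htop
      have hLle : L ≤ (T.eigenspace μ)ᗮ := by
        intro x hx
        have hxk : (⟨x, hx⟩ : L) ∈ p := htop ▸ Submodule.mem_top
        exact hxk
      have hstep : ∀ y ∈ (T.eigenspace μ)ᗮ, T y ∈ (T.eigenspace μ)ᗮ := by
        intro y hy
        rw [Submodule.mem_orthogonal]
        intro v hv
        have hv' : T v = μ • v := Module.End.mem_eigenspace_iff.mp hv
        calc inner ℂ v (T y) = inner ℂ (T v) y := (hsym v y).symm
          _ = (starRingEnd ℂ) μ * inner ℂ v y := by rw [hv', inner_smul_left]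
          _ = 0 := by rw [(Submodule.mem_orthogonal _ _).mp hy v hv, mul_zero]
      have hinv : ∀ k : ℕ, Submodule.map (T ^ k) L ≤ (T.eigenspace μ)ᗮ := by
        intro k
        induction k with
        | zero =>
          rintro _ ⟨y, hy, rfl⟩
          exact hLle hy
        | succ k ih =>
          rintro _ ⟨x, hx, rfl⟩
          have hx' : (T ^ k) x ∈ (T.eigenspace μ)ᗮ := ih ⟨x, hx, rfl⟩
          rw [pow_succ']
          exact hstep _ hx'
      have htople : (⊤ : Submodule ℂ (EuclideanSpace ℂ (Fin n))) ≤ (T.eigenspace μ)ᗮ :=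
        hL ▸ iSup_le hinv
      have hKbot : T.eigenspace μ = ⊥ := by
        rw [eq_bot_iff]
        intro v hv
        exact (Submodule.orthogonal_disjoint (T.eigenspace μ)).le_bot
          ⟨hv, htople Submodule.mem_top⟩
      exact hμ hKbot
    have hUeq : U μ = ((p : Submodule ℂ L) : Set L)ᶜ := by
      ext g
      simp only [hU, Set.mem_setOf_eq, Set.mem_compl_iff, SetLike.mem_coe, hp,
        Submodule.mem_comap, Submodule.coe_subtype]
      rw [← Submodule.orthogonalProjectionOnto_eq_zero_iff]
    rw [hUeq]
    exact aux_dense_compl _ hker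
  haveI : Finite {μ : ℂ // T.HasEigenvalue μ} := T.finite_hasEigenvalue.to_subtype
  have hSopen : IsOpen {g : L | ∀ μ : ℂ, T.HasEigenvalue μ →
      Submodule.orthogonalProjection (T.eigenspace μ) (g : EuclideanSpace ℂ (Fin n)) ≠ 0} := by
    rw [hSeq]
    exact isOpen_iInter_of_finite fun μ => hopenU μ.1
  have hSdense : Dense {g : L | ∀ μ : ℂ, T.HasEigenvalue μ →
      Submodule.orthogonalProjection (T.eigenspace μ) (g : EuclideanSpace ℂ (Fin n)) ≠ 0} := by
    rw [hSeq]
    exact dense_iInter_of_isOpen (fun μ => hopenU μ.1) (fun μ => hdenseU μ.1 μ.2)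
  refine ⟨hSopen.isGδ, hSdense, ?_⟩
  simp only [IsMeagre, compl_compl]
  exact residual_of_dense_open hSopen hSdense
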